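/- arXiv:1111.1410 — 5 statements merged into one kernel-verified Lean document; each statement's English description precedes it below -/
import Mathlib

section
/- For every plaintext bit p ∈ {0,1} and parameters w, w̃ ∈ {1,−1}, the ciphertext bit satisfies E(p,w,w̃) = p XOR (1 − w'), where w' = (w+1)/2 ∈ {0,1}. In other words, the encryption is exactly the exclusive-or of the plaintext bit with the complement of the bit w' derived from w. -/
/-- The threshold function: `f x = 1` if `x ≥ 0`, `0` otherwise. -/
noncomputable def f (x : ℝ) : ℕ := if 0 ≤ x then 1 else 0

/-- The bit `(w+1)/2` derived from a weight `w ∈ {1, -1}`, as a natural number. -/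
noncomputable def wbit (w : ℝ) : ℕ := ⌊(w + 1) / 2⌋.toNat

/-- Encryption of a bit `p` with weights `w, w̃ ∈ {1,-1}`:
`E p w w̃ = f (p·w + c·w̃ - θ)` if `w = 1`, `f (p·w - c·w̃ + θ)` otherwise,
where `c = -w/2` and `θ = ((w+1)/2) XOR ((w̃+1)/2)` (XOR of bits, cast to ℝ). -/
noncomputable def E (p : ℕ) (w wt : ℝ) : ℕ :=
  if w = 1 then
    f ((p : ℝ) * w + (-w / 2) * wt - ((wbit w ^^^ wbit wt : ℕ) : ℝ))
  else
    f ((p : ℝ) * w - (-w / 2) * wt + ((wbit w ^^^ wbit wt : ℕ) : ℝ))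

lemma wbit1 : wbit 1 = 1 := by norm_num [wbit]
lemma wbitm1 : wbit (-1) = 0 := by norm_num [wbit]

theorem stmt_5 (p : ℕ) (hp : p = 0 ∨ p = 1) (w wt : ℝ)
    (hw : w = 1 ∨ w = -1) (hwt : wt = 1 ∨ wt = -1) :
    E p w wt = p ^^^ (1 - wbit w) := by
  rcases hp with rfl | rfl <;> rcases hw with rfl | rfl <;> rcases hwt with rfl | rfl <;>
    norm_num [E, f, wbit1, wbitm1]
end

section
/- For every plaintext bit p ∈ {0,1}, every w ∈ {1,−1}, and every pair w̃₁, w̃₂ ∈ {1,−1}, one has E(p,w,w̃₁) = E(p,w,w̃₂); that is, the ciphertext bit produced by the encryption rule does not depend on the second weight sequence w̃ at all. -/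
theorem stmt_6 (p : ℕ) (hp : p = 0 ∨ p = 1) (w wt₁ wt₂ : ℝ)
    (hw : w = 1 ∨ w = -1) (hwt₁ : wt₁ = 1 ∨ wt₁ = -1) (hwt₂ : wt₂ = 1 ∨ wt₂ = -1) :
    E p w wt₁ = E p w wt₂ := by
  rcases hp with rfl|rfl <;> rcases hw with rfl|rfl <;>
    rcases hwt₁ with rfl|rfl <;> rcases hwt₂ with rfl|rfl <;>
    simp [E, f, wbit] <;> norm_num [Int.toNat]
end

section
/- Let w, w̃ : ℕ → {1,−1} be fixed keystream weight sequences. Suppose two plaintext bit sequences p, q : ℕ → {0,1} are encrypted bitwise with the same weights, producing p'(k) = E(p(k), w(k), w̃(k)) and q'(k) = E(q(k), w(k), w̃(k)). Then for every index k, q(k) = q'(k) XOR (p(k) XOR p'(k)); that is, the mask obtained by XORing one known plaintext/ciphertext pair decrypts any other ciphertext produced with the same key. -/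
theorem stmt_9 (w wt : ℕ → ℝ)
    (hw : ∀ k, w k = 1 ∨ w k = -1) (hwt : ∀ k, wt k = 1 ∨ wt k = -1)
    (p q : ℕ → ℕ) (hp : ∀ k, p k = 0 ∨ p k = 1) (hq : ∀ k, q k = 0 ∨ q k = 1)
    (p' q' : ℕ → ℕ)
    (hp' : ∀ k, p' k = E (p k) (w k) (wt k))
    (hq' : ∀ k, q' k = E (q k) (w k) (wt k)) :
    ∀ k, q k = q' k ^^^ (p k ^^^ p' k) := by
  intro k
  rw [hp' k, hq' k]
  rcases hw k with h1 | h1 <;> rcases hwt k with h2 | h2 <;>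
    rcases hp k with h3 | h3 <;> rcases hq k with h4 | h4 <;>
    simp [E, f, wbit, h1, h2, h3, h4] <;> norm_num
end

section
/- Let w, w̃ : Fin 8 → {1,−1} be fixed weight values for one byte position. Suppose two plaintext bytes with bit expansions p, q : Fin 8 → {0,1} are encrypted bitwise with the same weights, producing ciphertext bytes p'_n = Σ_{i=0}^{7} E(p(i),w(i),w̃(i))·2^i and q'_n = Σ_{i=0}^{7} E(q(i),w(i),w̃(i))·2^i, and let p_n = Σ_{i=0}^{7} p(i)·2^i and q_n = Σ_{i=0}^{7} q(i)·2^i. Then q_n = q'_n XOR (p_n XOR p'_n), where XOR is bitwise exclusive-or of natural numbers; i.e., the byte-level mask η_n = p_n XOR p'_n recovered from one known plaintext/ciphertext pair acts as an equivalent secret key for the byte. -/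
lemma bitstep (a b x y : ℕ) (ha : a ≤ 1) (hb : b ≤ 1) :
    (2 * x + a) ^^^ (2 * y + b) = 2 * (x ^^^ y) + (a ^^^ b) := by
  have := Nat.xor_bit (a == 1) x (b == 1) y
  interval_cases a <;> interval_cases b <;>
    simpa [Nat.bit, mul_comm] using this

lemma xorsum (a b : Fin 8 → ℕ) (ha : ∀ i, a i ≤ 1) (hb : ∀ i, b i ≤ 1) :
    (∑ i : Fin 8, a i * 2 ^ (i : ℕ)) ^^^ (∑ i : Fin 8, b i * 2 ^ (i : ℕ))
      = ∑ i : Fin 8, (a i ^^^ b i) * 2 ^ (i : ℕ) := by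
  have h : ∀ c : Fin 8 → ℕ, (∑ i : Fin 8, c i * 2 ^ (i : ℕ)) =
      2*(2*(2*(2*(2*(2*(2*(2*0 + c 7) + c 6) + c 5) + c 4) + c 3) + c 2) + c 1) + c 0 := by
    intro c
    have h3 : ((3:Fin 8):ℕ) = 3 := rfl
    have h4 : ((4:Fin 8):ℕ) = 4 := rfl
    have h5 : ((5:Fin 8):ℕ) = 5 := rfl
    have h6 : ((6:Fin 8):ℕ) = 6 := rfl
    have h7 : ((7:Fin 8):ℕ) = 7 := rfl
    norm_num [Fin.sum_univ_eight, h3, h4, h5, h6, h7]; omega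
  rw [h a, h b, h fun i => a i ^^^ b i]
  rw [bitstep _ _ _ _ (ha 0) (hb 0), bitstep _ _ _ _ (ha 1) (hb 1),
      bitstep _ _ _ _ (ha 2) (hb 2), bitstep _ _ _ _ (ha 3) (hb 3),
      bitstep _ _ _ _ (ha 4) (hb 4), bitstep _ _ _ _ (ha 5) (hb 5),
      bitstep _ _ _ _ (ha 6) (hb 6), bitstep _ _ _ _ (ha 7) (hb 7)]
  simp

lemma f_le (x : ℝ) : f x ≤ 1 := by unfold f; split <;> simp

lemma E_le (p : ℕ) (w wt : ℝ) : E p w wt ≤ 1 := by unfold E; split <;> exact f_le _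

lemma Ebit (w wt : ℝ) (hw : w = 1 ∨ w = -1) (hwt : wt = 1 ∨ wt = -1)
    (p q : ℕ) (hp : p = 0 ∨ p = 1) (hq : q = 0 ∨ q = 1) :
    q = E q w wt ^^^ (p ^^^ E p w wt) := by
  rcases hw with rfl | rfl <;> rcases hwt with rfl | rfl <;>
    rcases hp with rfl | rfl <;> rcases hq with rfl | rfl <;>
      norm_num [E, f, wbit]

theorem stmt_10 (w wt : Fin 8 → ℝ)
    (hw : ∀ i, w i = 1 ∨ w i = -1) (hwt : ∀ i, wt i = 1 ∨ wt i = -1)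
    (p q : Fin 8 → ℕ) (hp : ∀ i, p i = 0 ∨ p i = 1) (hq : ∀ i, q i = 0 ∨ q i = 1)
    (pn qn pn' qn' : ℕ)
    (hpn : pn = ∑ i : Fin 8, p i * 2 ^ (i : ℕ))
    (hqn : qn = ∑ i : Fin 8, q i * 2 ^ (i : ℕ))
    (hpn' : pn' = ∑ i : Fin 8, E (p i) (w i) (wt i) * 2 ^ (i : ℕ))
    (hqn' : qn' = ∑ i : Fin 8, E (q i) (w i) (wt i) * 2 ^ (i : ℕ)) :
    qn = qn' ^^^ (pn ^^^ pn') := by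
  have hple : ∀ i, p i ≤ 1 := fun i => by rcases hp i with h | h <;> omega
  have hEp : ∀ i, E (p i) (w i) (wt i) ≤ 1 := fun i => E_le _ _ _
  have hEq : ∀ i, E (q i) (w i) (wt i) ≤ 1 := fun i => E_le _ _ _
  have hxle : ∀ i, p i ^^^ E (p i) (w i) (wt i) ≤ 1 := by
    intro i
    have := E_le (p i) (w i) (wt i)
    interval_cases h : E (p i) (w i) (wt i) <;> rcases hp i with h' | h' <;> simp [h']
  rw [hpn, hqn, hpn', hqn',
    xorsum _ _ hple hEp, xorsum _ _ hEq hxle]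
  exact Finset.sum_congr rfl fun i _ => by
    rw [← Ebit (w i) (wt i) (hw i) (hwt i) (p i) (q i) (hp i) (hq i)]
end

section
/- Let w, w̃ : ℕ → {1,−1} be fixed keystream weight sequences, and let p, q : ℕ → {0,1} be two plaintext bit sequences that differ in exactly one position k₀ (i.e., p(k₀) ≠ q(k₀) and p(k) = q(k) for all k ≠ k₀). Then their bitwise encryptions p'(k) = E(p(k), w(k), w̃(k)) and q'(k) = E(q(k), w(k), w̃(k)) also differ in exactly the position k₀: p'(k₀) ≠ q'(k₀) and p'(k) = q'(k) for all k ≠ k₀. Hence changing one bit of the plain-image influences only the bit at the same location in the ciphertext. -/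
lemma key (w wt : ℝ) (hw : w = 1 ∨ w = -1) (hwt : wt = 1 ∨ wt = -1) :
    E 0 w wt ≠ E 1 w wt := by
  rcases hw with rfl | rfl <;> rcases hwt with rfl | rfl <;>
    norm_num [E, f, wbit]

theorem stmt_11 (w wt : ℕ → ℝ)
    (hw : ∀ k, w k = 1 ∨ w k = -1) (hwt : ∀ k, wt k = 1 ∨ wt k = -1)
    (p q : ℕ → ℕ) (hp : ∀ k, p k = 0 ∨ p k = 1) (hq : ∀ k, q k = 0 ∨ q k = 1)
    (k₀ : ℕ) (hdiff : p k₀ ≠ q k₀) (hsame : ∀ k, k ≠ k₀ → p k = q k) :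
    E (p k₀) (w k₀) (wt k₀) ≠ E (q k₀) (w k₀) (wt k₀) ∧
    ∀ k, k ≠ k₀ → E (p k) (w k) (wt k) = E (q k) (w k) (wt k) := by
  refine ⟨?_, fun k hk => by rw [hsame k hk]⟩
  rcases hp k₀ with h1 | h1 <;> rcases hq k₀ with h2 | h2 <;>
    rw [h1, h2] <;> simp_all
  · exact key _ _ (hw k₀) (hwt k₀)
  · exact (key _ _ (hw k₀) (hwt k₀)).symm
end
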